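/- Let K be a finite CW complex with characteristic maps f_α : B^{dim e_α} → closure(e_α) such that (i) each f_α(B^{dim e_α}) is a union of open cells, and (ii) for each α, the preimage under f_α of the open cells of dimension dim e_α − 1 is a dense subset of the boundary sphere of B^{dim e_α}. Then the closure poset of K is graded by cell dimension: whenever an open cell e_ρ lies in the closure of e_σ with dim e_σ − dim e_ρ > 1, there exists an open cell e_τ with e_ρ < e_τ < e_σ in the closure poset. -/
import Mathlib


open Metric Set

/-- A finite CW complex on a Hausdorff space `X`: finitely many disjoint open cells
`cell α` covering `X`, with characteristic maps `f α` defined (continuously) on the closed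
unit ball of a Euclidean space of the appropriate dimension, mapping the open ball
homeomorphically onto the open cell and the boundary sphere into a union of
lower-dimensional open cells. -/
structure FiniteCWComplex (X : Type) [TopologicalSpace X] [T2Space X] where
  ι : Type
  finite_ι : Finite ι
  dim : ι → ℕ
  cell : ι → Set X
  f : (α : ι) → EuclideanSpace ℝ (Fin (dim α)) → X
  f_cont : ∀ α, ContinuousOn (f α) (closedBall 0 1)
  cells_disjoint : ∀ α β, α ≠ β → Disjoint (cell α) (cell β)
  cells_cover : ⋃ α, cell α = univ
  image_interior : ∀ α, f α '' ball 0 1 = cell α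
  interior_embedding : ∀ α,
    Topology.IsEmbedding ((ball (0 : EuclideanSpace ℝ (Fin (dim α))) 1).restrict (f α))
  image_closedBall : ∀ α, f α '' closedBall 0 1 = closure (cell α)
  boundary_cells : ∀ α, ∃ s : Set ι, (∀ β ∈ s, dim β < dim α) ∧
    f α '' sphere 0 1 = ⋃ β ∈ s, cell β

variable {X : Type} [TopologicalSpace X] [T2Space X]

/-- Condition 1 of the regularity criterion: each `f α (B^{dim e_α})` is a union of open
cells. -/
def Cond1 (K : FiniteCWComplex X) : Prop :=
  ∀ α, ∃ s : Set K.ι, K.f α '' closedBall 0 1 = ⋃ β ∈ s, K.cell β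

/-- Condition 2 of the regularity criterion: for each `α`, the preimage under `f α` of the
open cells of dimension `dim e_α − 1` is dense in the boundary sphere of the ball. -/
def Cond2 (K : FiniteCWComplex X) : Prop :=
  ∀ α, sphere (0 : EuclideanSpace ℝ (Fin (K.dim α))) 1 ⊆
    closure (sphere 0 1 ∩ K.f α ⁻¹' (⋃ β ∈ {β | K.dim β + 1 = K.dim α}, K.cell β))

/-- If a point of `cell ρ` lies in a union of cells, then all of `cell ρ` does. -/
lemma cell_subset_of_mem (K : FiniteCWComplex X) {s : Set K.ι} {ρ : K.ι} {x : X}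
    (hx : x ∈ K.cell ρ) (hx' : x ∈ ⋃ β ∈ s, K.cell β) :
    K.cell ρ ⊆ ⋃ β ∈ s, K.cell β := by
  obtain ⟨β, hβs, hxβ⟩ := mem_iUnion₂.mp hx'
  have hβρ : β = ρ := by
    by_contra h
    exact Set.disjoint_left.mp (K.cells_disjoint β ρ h) hxβ hx
  subst hβρ
  exact subset_biUnion_of_mem hβs

/-- Under conditions 1 and 2 of the regularity criterion, the closure
poset of a finite CW complex is graded by cell dimension: whenever `cell ρ` lies in the
closure of `cell σ` and `dim σ − dim ρ > 1`, there is an intermediate cell `τ`. -/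
theorem closurePoset_graded (K : FiniteCWComplex X) (h1 : Cond1 K) (h2 : Cond2 K)
    (ρ σ : K.ι) (hρσ : K.cell ρ ⊆ closure (K.cell σ)) (hdim : K.dim ρ + 1 < K.dim σ) :
    ∃ τ : K.ι, K.cell ρ ⊆ closure (K.cell τ) ∧ K.cell τ ⊆ closure (K.cell σ) ∧
      K.dim ρ < K.dim τ ∧ K.dim τ < K.dim σ := by
  have _ : Finite K.ι := K.finite_ι
  have hρσne : ρ ≠ σ := fun h => by subst h; omega
  -- pick a point x in cell ρ
  obtain ⟨x, hx⟩ : (K.cell ρ).Nonempty :=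
    ⟨K.f ρ 0, (K.image_interior ρ) ▸ mem_image_of_mem _ (mem_ball_self one_pos)⟩
  have hxσ : x ∈ closure (K.cell σ) := hρσ hx
  rw [← K.image_closedBall σ] at hxσ
  obtain ⟨y, hy, hxy⟩ := hxσ
  -- y is on the boundary sphere
  have hy_sphere : y ∈ sphere (0 : EuclideanSpace ℝ (Fin (K.dim σ))) 1 := by
    have hy' : y ∈ ball (0 : EuclideanSpace ℝ (Fin (K.dim σ))) 1 ∪ sphere 0 1 := by
      rw [ball_union_sphere]; exact hy
    rcases hy' with h | h
    · exact absurd ((K.image_interior σ) ▸ ⟨y, h, hxy⟩)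
        (Set.disjoint_left.mp (K.cells_disjoint ρ σ hρσne) hx)
    · exact h
  set U : Set X := ⋃ β ∈ {β | K.dim β + 1 = K.dim σ}, K.cell β with hU
  set S : Set (EuclideanSpace ℝ (Fin (K.dim σ))) :=
    sphere 0 1 ∩ K.f σ ⁻¹' U with hS
  have hyS : y ∈ closure S := h2 σ hy_sphere
  have hScb : closure S ⊆ closedBall (0 : EuclideanSpace ℝ (Fin (K.dim σ))) 1 := by
    refine (closure_mono inter_subset_left).trans ?_
    rw [isClosed_sphere.closure_eq]
    exact sphere_subset_closedBall
  have hcont : ContinuousOn (K.f σ) (closure S) := (K.f_cont σ).mono hScb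
  have hximg : x ∈ closure (K.f σ '' S) :=
    hxy ▸ hcont.image_closure (mem_image_of_mem _ hyS)
  -- the relevant cells of codimension 1 that meet the closure of cell σ
  set T : Set K.ι :=
    {β | K.dim β + 1 = K.dim σ ∧ (K.cell β ∩ closure (K.cell σ)).Nonempty} with hT
  have himg_sub : K.f σ '' S ⊆ ⋃ β ∈ T, K.cell β := by
    rintro z ⟨w, ⟨hw_sph, hw_pre⟩, rfl⟩
    obtain ⟨β, hβ, hzβ⟩ := mem_iUnion₂.mp hw_pre
    have hzcl : K.f σ w ∈ closure (K.cell σ) := by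
      rw [← K.image_closedBall σ]
      exact mem_image_of_mem _ (sphere_subset_closedBall hw_sph)
    exact mem_biUnion ⟨hβ, ⟨_, hzβ, hzcl⟩⟩ hzβ
  have hfin : T.Finite := Set.toFinite T
  have hclsub : closure (K.f σ '' S) ⊆ ⋃ β ∈ T, closure (K.cell β) := by
    calc closure (K.f σ '' S) ⊆ closure (⋃ β ∈ T, K.cell β) := closure_mono himg_sub
      _ = ⋃ β ∈ T, closure (K.cell β) := hfin.closure_biUnion _
  obtain ⟨τ, hτT, hxτ⟩ := mem_iUnion₂.mp (hclsub hximg)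
  obtain ⟨hτdim, w, hwτ, hwcl⟩ := hτT
  -- closure (cell σ) and closure (cell τ) are unions of cells
  obtain ⟨sσ, hsσ⟩ := h1 σ
  rw [K.image_closedBall σ] at hsσ
  obtain ⟨sτ, hsτ⟩ := h1 τ
  rw [K.image_closedBall τ] at hsτ
  have hτσ : K.cell τ ⊆ closure (K.cell σ) := by
    rw [hsσ]
    exact cell_subset_of_mem K hwτ (hsσ ▸ hwcl)
  have hρτ : K.cell ρ ⊆ closure (K.cell τ) := by
    rw [hsτ]
    exact cell_subset_of_mem K hx (hsτ ▸ hxτ)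
  exact ⟨τ, hρτ, hτσ, by omega, by omega⟩
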